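/- arXiv:1803.06300 — 2 statements merged into one kernel-verified Lean document; each statement's English description precedes it below -/
import Mathlib

section
/- In a deterministic labeled transition system, let a be an action enabled at a state s, and let T = ⟨a₀, …, a_k⟩ be a finite action sequence executing from s such that every action a_i occurring in T is independent of a. Then: (1) a is enabled at the result state r(T, s); (2) T executes from the state a(s); and (3) a(r(T, s)) = r(T, a(s)). -/
/-- Run a finite sequence of actions from a state in a deterministic LTS
given by the partial step function `step`. -/
def run {S A : Type*} (step : A → S → Option S) : List A → S → Option S
  | [], s => some s
  | a :: T, s => (step a s).bind (run step T)

/-- Actions `a` and `b` are independent: whenever both are enabled at a state `s`,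
`b` is enabled at `a(s)`, `a` is enabled at `b(s)`, and `a(b(s)) = b(a(s))`. -/
def Indep {S A : Type*} (step : A → S → Option S) (a b : A) : Prop :=
  ∀ s sa sb, step a s = some sa → step b s = some sb →
    step b sa ≠ none ∧ step b sa = step a sb

/-- If `a` is enabled at `s` (with `a(s) = sa`), `T` executes from `s` with result `t`,
and every action of `T` is independent of `a`, then `a` is enabled at `t`, `T` executes
from `sa`, and `a(r(T,s)) = r(T, a(s))`. -/
theorem indep_commute_run {S A : Type*} (step : A → S → Option S) (a : A)
    (T : List A) (s sa t : S)
    (ha : step a s = some sa)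
    (hT : run step T s = some t)
    (hindep : ∀ x ∈ T, Indep step x a) :
    ∃ t', step a t = some t' ∧ run step T sa = some t' := by
  induction T generalizing s sa with
  | nil =>
    simp only [run, Option.some.injEq] at hT
    subst hT
    exact ⟨sa, ha, rfl⟩
  | cons b T ih =>
    simp only [run, Option.bind_eq_some_iff] at hT
    obtain ⟨sb, hb, hrun⟩ := hT
    obtain ⟨hne, heq⟩ := hindep b (by simp) s sb sa hb ha
    obtain ⟨sb', hsb'⟩ := Option.ne_none_iff_exists'.mp hne
    have hbsa : step b sa = some sb' := by rw [← heq]; exact hsb'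
    obtain ⟨t', ht1, ht2⟩ := ih sb sb' hsb' hrun (fun x hx => hindep x (by simp [hx]))
    exact ⟨t', ht1, by simp [run, hbsa, ht2]⟩
end

section
/- In a deterministic labeled transition system, let a be an action enabled at a state s, and suppose that every action b distinct from a that is co-enabled with a at some state (i.e., there exists a state s' at which both a and b are enabled) is independent of a. Then for every execution from s consisting of actions a₀, …, a_k followed by one further action b such that b ≠ a and b is not independent of a, there exists an index i ≤ k with a_i = a. (This is condition C1 of partial-order reduction for a singleton ample set {a}.) -/
theorem run_preserves {S A : Type*} (step : A → S → Option S) (a : A)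
    (hco : ∀ b : A, b ≠ a →
      (∃ s' : S, step a s' ≠ none ∧ step b s' ≠ none) → Indep step a b) :
    ∀ (T : List A) (s t : S), step a s ≠ none → (∀ c ∈ T, c ≠ a) →
      run step T s = some t → step a t ≠ none := by
  intro T
  induction T with
  | nil => intro s t ha _ h; simp [run] at h; subst h; exact ha
  | cons c T ih =>
    intro s t ha hne h
    simp only [run, Option.bind_eq_some_iff] at h
    obtain ⟨s', hc, hrun⟩ := h
    obtain ⟨sa, hsa⟩ := Option.ne_none_iff_exists'.1 ha
    have hcne : c ≠ a := hne c (List.mem_cons_self (a := c) (l := T))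
    have hind := hco c hcne ⟨s, ha, by simp [hc]⟩
    obtain ⟨h1, h2⟩ := hind s sa s' hsa hc
    exact ih s' t (h2 ▸ h1) (fun d hd => hne d (List.mem_cons_of_mem c hd)) hrun

/-- Condition C1 of partial-order reduction for the singleton ample set `{a}`:
if `a` is enabled at `s` and every action `b ≠ a` co-enabled with `a` at some
state is independent of `a`, then along every execution from `s` followed by an
enabled action `b` with `b ≠ a` and `b` dependent on `a`, the action `a` occurs
in the executed sequence. -/
theorem ample_C1 {S A : Type*} (step : A → S → Option S) (a : A) (s : S)
    (ha : step a s ≠ none)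
    (hco : ∀ b : A, b ≠ a →
      (∃ s' : S, step a s' ≠ none ∧ step b s' ≠ none) → Indep step a b) :
    ∀ (T : List A) (t : S) (b : A),
      run step T s = some t → step b t ≠ none → b ≠ a → ¬ Indep step a b →
      a ∈ T := by
  intro T t b hrun hb hbne hdep
  by_contra hmem
  have hat : step a t ≠ none :=
    run_preserves step a hco T s t ha (fun c hc hce => hmem (hce ▸ hc)) hrun
  exact hdep (hco b hbne ⟨t, hat, hb⟩)
end
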